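/- Let C ∈ ℂ be nonzero, let z_1, …, z_t ∈ ℂ be distinct points, let r_1, …, r_t be positive integers, set r = r_1 + ⋯ + r_t, and let f(z) = C/((z − z_1)^{r_1}⋯(z − z_t)^{r_t}). Then for every positive integer k there is a polynomial Q_k of degree at most k(t−1) with leading term B·z^{k(t−1)}, where B = (−1)^k · r(r+1)⋯(r+k−1) · C ≠ 0, such that f^{(k)}(z) = Q_k(z)/∏_{j=1}^{t} (z − z_j)^{r_j + k} for all z ∉ {z_1, …, z_t}. -/

import Mathlib

open Filter Set Polynomial

lemma coeff_mul_of_degree_le' {p q : ℂ[X]} {a b : ℕ} (hp : p.degree ≤ a) (hq : q.degree ≤ b) :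
    (p * q).coeff (a + b) = p.coeff a * q.coeff b := by
  rw [Polynomial.coeff_mul]
  apply Finset.sum_eq_single (a, b)
  · rintro ⟨i, j⟩ hij hne
    simp only [Finset.HasAntidiagonal.mem_antidiagonal] at hij
    rcases lt_or_ge (a : WithBot ℕ) i with h | h
    · rw [Polynomial.coeff_eq_zero_of_degree_lt (lt_of_le_of_lt hp (by exact_mod_cast h)),
        zero_mul]
    · have hia : i ≤ a := by exact_mod_cast h
      have hj : b < j := by
        rcases lt_or_eq_of_le hia with h' | h'
        · omega
        · exact absurd (by simp [Prod.ext_iff]; omega) hne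
      rw [Polynomial.coeff_eq_zero_of_degree_lt (lt_of_le_of_lt hq (by exact_mod_cast hj)),
        mul_zero]
  · intro h
    simp at h

lemma aux10 (t : ℕ) (ht : 0 < t) (C : ℂ)
    (z : Fin t → ℂ) (r : Fin t → ℕ) (hr : ∀ j, 0 < r j) :
    ∀ k : ℕ, ∃ Q : Polynomial ℂ,
      Q.degree ≤ (k * (t - 1) : ℕ) ∧
      Q.coeff (k * (t - 1))
        = (-1 : ℂ) ^ k * (∏ i ∈ Finset.range k, (((∑ j, r j) + i : ℕ) : ℂ)) * C ∧
      ∀ x : ℂ, (∀ j, x ≠ z j) →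
        iteratedDeriv k (fun y => C / ∏ j, (y - z j) ^ (r j)) x
          = Q.eval x / ∏ j, (x - z j) ^ (r j + k) := by
  have h1t : (1 : ℕ) ≤ t := ht
  intro k
  induction k with
  | zero =>
    refine ⟨Polynomial.C C, by simpa using Polynomial.degree_C_le, by simp, ?_⟩
    intro x hx
    simp [iteratedDeriv_zero]
  | succ k ih =>
    obtain ⟨Q, hdeg, hcoeff, heq⟩ := ih
    have hQnat : Q.natDegree ≤ k * (t - 1) := Polynomial.natDegree_le_iff_degree_le.mpr hdeg
    set P : ℂ[X] := ∏ j : Fin t, (Polynomial.X - Polynomial.C (z j)) with hPdef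
    set S : ℂ[X] := ∑ j : Fin t, Polynomial.C ((r j + k : ℕ) : ℂ) *
        ∏ i ∈ Finset.univ.erase j, (Polynomial.X - Polynomial.C (z i)) with hSdef
    have hPm : P.Monic := Polynomial.monic_prod_of_monic _ _
      (fun j _ => Polynomial.monic_X_sub_C (z j))
    have hPnat : P.natDegree = t := by
      rw [hPdef, Polynomial.natDegree_prod_of_monic _ _
        (fun j _ => Polynomial.monic_X_sub_C (z j))]
      simp
    have hPdeg : P.degree ≤ (t : ℕ) := hPnat ▸ Polynomial.degree_le_natDegree
    have hPcoeff : P.coeff t = 1 := by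
      have := hPm.coeff_natDegree
      rwa [hPnat] at this
    have hPjm : ∀ j : Fin t, (∏ i ∈ Finset.univ.erase j,
        (Polynomial.X - Polynomial.C (z i))).Monic :=
      fun j => Polynomial.monic_prod_of_monic _ _ (fun i _ => Polynomial.monic_X_sub_C (z i))
    have hPjnat : ∀ j : Fin t, (∏ i ∈ Finset.univ.erase j,
        (Polynomial.X - Polynomial.C (z i))).natDegree = t - 1 := by
      intro j
      rw [Polynomial.natDegree_prod_of_monic _ _ (fun i _ => Polynomial.monic_X_sub_C (z i))]
      simp [Finset.card_erase_of_mem]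
    have hSdeg : S.degree ≤ ((t - 1 : ℕ) : WithBot ℕ) := by
      refine le_trans (Polynomial.degree_sum_le _ _) ?_
      apply Finset.sup_le
      intro j _
      refine le_trans (Polynomial.degree_mul_le _ _) ?_
      refine le_trans (add_le_add Polynomial.degree_C_le le_rfl) ?_
      rw [zero_add]
      exact (hPjnat j) ▸ Polynomial.degree_le_natDegree
    have hScoeff : S.coeff (t - 1) = ∑ j : Fin t, ((r j + k : ℕ) : ℂ) := by
      rw [hSdef, Polynomial.finset_sum_coeff]
      refine Finset.sum_congr rfl fun j _ => ?_
      rw [Polynomial.coeff_C_mul]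
      have : (∏ i ∈ Finset.univ.erase j,
          (Polynomial.X - Polynomial.C (z i))).coeff (t - 1) = 1 := by
        have := (hPjm j).coeff_natDegree
        rwa [hPjnat j] at this
      rw [this, mul_one]
    have hsumS : (∑ j : Fin t, ((r j + k : ℕ) : ℂ))
        = ((∑ j, r j : ℕ) : ℂ) + (t : ℂ) * (k : ℂ) := by
      push_cast
      rw [Finset.sum_add_distrib]
      simp [Finset.card_univ, mul_comm]
    refine ⟨Q.derivative * P - Q * S, ?_, ?_, ?_⟩
    · -- degree bound
      refine le_trans (Polynomial.degree_sub_le _ _) (max_le ?_ ?_)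
      · by_cases h0 : k * (t - 1) = 0
        · have hQC : Q = Polynomial.C (Q.coeff 0) :=
            Polynomial.eq_C_of_degree_le_zero (by simpa [h0] using hdeg)
          rw [hQC]
          simp
        · have h2 : Q.derivative.natDegree ≤ k * (t - 1) - 1 :=
            le_trans (Polynomial.natDegree_derivative_le Q) (by omega)
          have hQ'deg : Q.derivative.degree ≤ ((k * (t - 1) - 1 : ℕ) : WithBot ℕ) :=
            le_trans Polynomial.degree_le_natDegree (by exact_mod_cast h2)
          refine le_trans (Polynomial.degree_mul_le _ _) ?_
          refine le_trans (add_le_add hQ'deg hPdeg) ?_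
          rw [← Nat.cast_add, Nat.cast_le]
          have hm : (k + 1) * (t - 1) = k * (t - 1) + (t - 1) := by ring
          omega
      · refine le_trans (Polynomial.degree_mul_le _ _) ?_
        refine le_trans (add_le_add hdeg hSdeg) ?_
        rw [← Nat.cast_add, Nat.cast_le]
        have hm : (k + 1) * (t - 1) = k * (t - 1) + (t - 1) := by ring
        omega
    · -- leading coefficient
      rw [Polynomial.coeff_sub]
      have hc1 : (Q.derivative * P).coeff ((k + 1) * (t - 1))
          = ((k * (t - 1) : ℕ) : ℂ) * Q.coeff (k * (t - 1)) := by
        by_cases h0 : k * (t - 1) = 0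
        · have hQC : Q = Polynomial.C (Q.coeff 0) :=
            Polynomial.eq_C_of_degree_le_zero (by simpa [h0] using hdeg)
          rw [hQC]
          simp [h0]
        · have h2 : Q.derivative.natDegree ≤ k * (t - 1) - 1 :=
            le_trans (Polynomial.natDegree_derivative_le Q) (by omega)
          have hQ'deg : Q.derivative.degree ≤ ((k * (t - 1) - 1 : ℕ) : WithBot ℕ) :=
            le_trans Polynomial.degree_le_natDegree (by exact_mod_cast h2)
          rw [show (k + 1) * (t - 1) = (k * (t - 1) - 1) + t by
            have hm : (k + 1) * (t - 1) = k * (t - 1) + (t - 1) := by ring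
            omega]
          rw [coeff_mul_of_degree_le' hQ'deg hPdeg, hPcoeff, mul_one,
            Polynomial.coeff_derivative]
          rw [show k * (t - 1) - 1 + 1 = k * (t - 1) by omega]
          have h1 : 1 ≤ k * (t - 1) := Nat.one_le_iff_ne_zero.mpr h0
          push_cast [Nat.cast_sub h1]
          ring
      have hc2 : (Q * S).coeff ((k + 1) * (t - 1))
          = Q.coeff (k * (t - 1)) * (((∑ j, r j : ℕ) : ℂ) + (t : ℂ) * (k : ℂ)) := by
        rw [show (k + 1) * (t - 1) = k * (t - 1) + (t - 1) by ring]
        rw [coeff_mul_of_degree_le' hdeg hSdeg, hScoeff, hsumS]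
      rw [hc1, hc2, hcoeff, Finset.prod_range_succ]
      push_cast [Nat.cast_sub h1t]
      ring
    · -- the derivative formula
      intro x hx
      have hx' : ∀ j, x - z j ≠ 0 := fun j => sub_ne_zero.mpr (hx j)
      have hDx : (∏ j, (x - z j) ^ (r j + k)) ≠ 0 :=
        Finset.prod_ne_zero_iff.mpr fun j _ => pow_ne_zero _ (hx' j)
      have hPx : (∏ j, (x - z j)) ≠ 0 := Finset.prod_ne_zero_iff.mpr fun j _ => hx' j
      have hU : IsOpen (⋂ j, {z j}ᶜ : Set ℂ) :=
        isOpen_iInter_of_finite fun j => isOpen_compl_singleton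
      have hxU : x ∈ (⋂ j, {z j}ᶜ : Set ℂ) := by
        simp only [Set.mem_iInter, Set.mem_compl_iff, Set.mem_singleton_iff]
        exact hx
      have hev : iteratedDeriv k (fun y => C / ∏ j, (y - z j) ^ (r j))
          =ᶠ[nhds x] (fun y => Q.eval y / ∏ j, (y - z j) ^ (r j + k)) := by
        filter_upwards [hU.mem_nhds hxU] with y hy
        refine heq y ?_
        simpa only [Set.mem_iInter, Set.mem_compl_iff, Set.mem_singleton_iff] using hy
      rw [iteratedDeriv_succ, hev.deriv_eq]
      have hD : HasDerivAt (fun y => ∏ j, (y - z j) ^ (r j + k))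
          (∑ j, (∏ i ∈ Finset.univ.erase j, (x - z i) ^ (r i + k)) •
            (((r j + k : ℕ) : ℂ) * (x - z j) ^ (r j + k - 1) * 1)) x :=
        HasDerivAt.fun_finsetProd fun j _ =>
          ((hasDerivAt_id x).sub_const (z j)).pow (r j + k)
      have hQx : HasDerivAt (fun y => Q.eval y) (Q.derivative.eval x) x := Q.hasDerivAt x
      have hdiv := hQx.div hD hDx
      rw [show (fun y => Q.eval y / ∏ j, (y - z j) ^ (r j + k)) = ((fun y => Q.eval y) / fun y => ∏ j, (y - z j) ^ (r j + k)) from rfl, hdiv.deriv]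
      -- now the algebra
      have key : (∑ j, (∏ i ∈ Finset.univ.erase j, (x - z i) ^ (r i + k)) •
            (((r j + k : ℕ) : ℂ) * (x - z j) ^ (r j + k - 1) * 1)) * (∏ j, (x - z j))
          = (∏ j, (x - z j) ^ (r j + k)) *
            (∑ j, ((r j + k : ℕ) : ℂ) * ∏ i ∈ Finset.univ.erase j, (x - z i)) := by
        rw [Finset.sum_mul, Finset.mul_sum]
        refine Finset.sum_congr rfl fun j _ => ?_
        rw [smul_eq_mul,
          ← Finset.mul_prod_erase Finset.univ (fun i => x - z i) (Finset.mem_univ j),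
          ← Finset.mul_prod_erase Finset.univ (fun i => (x - z i) ^ (r i + k))
            (Finset.mem_univ j)]
        have hpow : (x - z j) ^ (r j + k - 1) * (x - z j) = (x - z j) ^ (r j + k) := by
          rw [← pow_succ]
          congr 1
          have := hr j
          omega
        calc (∏ i ∈ Finset.univ.erase j, (x - z i) ^ (r i + k)) *
              (((r j + k : ℕ) : ℂ) * (x - z j) ^ (r j + k - 1) * 1) *
              ((x - z j) * ∏ i ∈ Finset.univ.erase j, (x - z i))
            = ((x - z j) ^ (r j + k - 1) * (x - z j)) * (((r j + k : ℕ) : ℂ) *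
              (∏ i ∈ Finset.univ.erase j, (x - z i) ^ (r i + k)) *
              ∏ i ∈ Finset.univ.erase j, (x - z i)) := by ring
          _ = (x - z j) ^ (r j + k) * (∏ i ∈ Finset.univ.erase j, (x - z i) ^ (r i + k)) *
              (((r j + k : ℕ) : ℂ) * ∏ i ∈ Finset.univ.erase j, (x - z i)) := by
              rw [hpow]; ring
      have hden : (∏ j, (x - z j) ^ (r j + (k + 1)))
          = (∏ j, (x - z j) ^ (r j + k)) * (∏ j, (x - z j)) := by
        rw [← Finset.prod_mul_distrib]
        refine Finset.prod_congr rfl fun j _ => ?_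
        rw [show r j + (k + 1) = (r j + k) + 1 by ring, pow_succ]
      have hevalP : P.eval x = ∏ j, (x - z j) := by
        simp [hPdef, Polynomial.eval_prod]
      have hevalS : S.eval x = ∑ j, ((r j + k : ℕ) : ℂ) *
          ∏ i ∈ Finset.univ.erase j, (x - z i) := by
        simp [hSdef, Polynomial.eval_finset_sum, Polynomial.eval_prod]
      rw [hden, Polynomial.eval_sub, Polynomial.eval_mul, Polynomial.eval_mul, hevalP, hevalS]
      rw [div_eq_div_iff (pow_ne_zero 2 hDx) (mul_ne_zero hDx hPx)]
      linear_combination (-(Q.eval x) * (∏ j, (x - z j) ^ (r j + k))) * key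

/-- Structure of the `k`-th derivative of `C/∏ (z - z_j)^{r_j}`. -/
theorem stmt10
    (t : ℕ) (ht : 0 < t) (C : ℂ) (hC : C ≠ 0)
    (z : Fin t → ℂ) (hz : Function.Injective z)
    (r : Fin t → ℕ) (hr : ∀ j, 0 < r j)
    (k : ℕ) (hk : 0 < k) :
    ∃ Q : Polynomial ℂ,
      Q.degree ≤ (k * (t - 1) : ℕ) ∧
      Q.coeff (k * (t - 1))
        = (-1 : ℂ) ^ k * (∏ i ∈ Finset.range k, (((∑ j, r j) + i : ℕ) : ℂ)) * C ∧
      (-1 : ℂ) ^ k * (∏ i ∈ Finset.range k, (((∑ j, r j) + i : ℕ) : ℂ)) * C ≠ 0 ∧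
      ∀ x : ℂ, (∀ j, x ≠ z j) →
        iteratedDeriv k (fun y => C / ∏ j, (y - z j) ^ (r j)) x
          = Q.eval x / ∏ j, (x - z j) ^ (r j + k) := by
  obtain ⟨Q, h1, h2, h3⟩ := aux10 t ht C z r hr k
  have hrpos : 0 < ∑ j, r j := by
    have : Nonempty (Fin t) := ⟨⟨0, ht⟩⟩
    exact Finset.sum_pos (fun j _ => hr j) Finset.univ_nonempty
  refine ⟨Q, h1, h2, ?_, h3⟩
  refine mul_ne_zero (mul_ne_zero (pow_ne_zero _ (by norm_num)) ?_) hC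
  refine Finset.prod_ne_zero_iff.mpr fun i _ => ?_
  exact Nat.cast_ne_zero.mpr (by omega)
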